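/- arXiv:2010.04677 — 4 statements merged into one kernel-verified Lean document; each statement's English description precedes it below -/
import Mathlib

section
/- Define on X = (Δ_{n²})^m × Δ_n the norm ‖x‖_X = sqrt(Σ_{i=1}^m ‖x_i‖₁² + m‖p‖₁²) for x = (x₁,…,x_m,p). Then for the block matrix 𝐀 with blocks (A, …, A) on the diagonal acting on the x_i and a last block ℰ with i-th block (−I_n, 0) acting on p, one has max over ‖x‖_X ≤ 1 of ‖𝐀x‖₂² ≤ 2, where the components of x are additionally required to be entrywise nonnegative. -/
lemma sum_sq_le_sq_sum' {n : ℕ} (f : Fin n → ℝ) (h : ∀ j, 0 ≤ f j) :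
    ∑ j, f j ^ 2 ≤ (∑ j, f j) ^ 2 := by
  rw [sq, Finset.sum_mul]
  apply Finset.sum_le_sum
  intro j _
  rw [sq]
  exact mul_le_mul_of_nonneg_left
    (Finset.single_le_sum (fun k _ => h k) (Finset.mem_univ j)) (h j)

/-- For the block matrix `𝐀` of the WB saddle-point reformulation (diagonal
blocks `A` acting on the `x_i`, last block `ℰ` with `i`-th block `(−I_n, 0)`
acting on `p`), and any nonnegative `x = (x₁,…,x_m,p)` with
`‖x‖_X² = Σᵢ ‖xᵢ‖₁² + m‖p‖₁² ≤ 1`, one has `‖𝐀x‖₂² ≤ 2`.  The `i`-th `2n`-block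
of `𝐀x` is `A xᵢ − (pᵀ, 0ᵀ)ᵀ`, i.e. row sums of `xᵢ` minus `p`, then column
sums of `xᵢ`. -/
theorem block_matrix_l2_bound (n m : ℕ) (hn : 0 < n) (hm : 0 < m)
    (x : Fin m → Fin n → Fin n → ℝ) (p : Fin n → ℝ)
    (hx : ∀ i j k, 0 ≤ x i j k) (hp : ∀ j, 0 ≤ p j)
    (hnorm : (∑ i, (∑ j, ∑ k, x i j k) ^ 2) + m * (∑ j, p j) ^ 2 ≤ 1) :
    ∑ i, ((∑ j, ((∑ k, x i j k) - p j) ^ 2) + ∑ k, (∑ j, x i j k) ^ 2) ≤ 2 := by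
  have key : ∀ i, (∑ j, ((∑ k, x i j k) - p j) ^ 2) + ∑ k, (∑ j, x i j k) ^ 2
      ≤ 2 * (∑ j, ∑ k, x i j k) ^ 2 + (∑ j, p j) ^ 2 := by
    intro i
    have h1 : ∑ j, ((∑ k, x i j k) - p j) ^ 2
        ≤ ∑ j, ((∑ k, x i j k) ^ 2 + p j ^ 2) := by
      apply Finset.sum_le_sum
      intro j _
      have hr : 0 ≤ ∑ k, x i j k := Finset.sum_nonneg fun k _ => hx i j k
      nlinarith [mul_nonneg hr (hp j)]
    rw [Finset.sum_add_distrib] at h1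
    have h2 : ∑ j, (∑ k, x i j k) ^ 2 ≤ (∑ j, ∑ k, x i j k) ^ 2 :=
      sum_sq_le_sq_sum' _ (fun j => Finset.sum_nonneg fun k _ => hx i j k)
    have h3 : ∑ j, p j ^ 2 ≤ (∑ j, p j) ^ 2 := sum_sq_le_sq_sum' _ hp
    have h4 : ∑ k, (∑ j, x i j k) ^ 2 ≤ (∑ k, ∑ j, x i j k) ^ 2 :=
      sum_sq_le_sq_sum' _ (fun k => Finset.sum_nonneg fun j _ => hx i j k)
    rw [Finset.sum_comm] at h4
    linarith
  calc ∑ i, ((∑ j, ((∑ k, x i j k) - p j) ^ 2) + ∑ k, (∑ j, x i j k) ^ 2)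
      ≤ ∑ i : Fin m, (2 * (∑ j, ∑ k, x i j k) ^ 2 + (∑ j, p j) ^ 2) :=
        Finset.sum_le_sum fun i _ => key i
    _ = 2 * (∑ i, (∑ j, ∑ k, x i j k) ^ 2) + m * (∑ j, p j) ^ 2 := by
        rw [Finset.sum_add_distrib, Finset.mul_sum, Finset.sum_const,
          Finset.card_univ, Fintype.card_fin, nsmul_eq_mul]
    _ ≤ 2 := by nlinarith [sq_nonneg (∑ j, p j), (Nat.one_le_cast.mpr hm : (1:ℝ) ≤ m)]
end

section
/- The bilinear function f(x,y) = yᵀ𝐀x on X × Y, with X endowed with the norm ‖x‖_X = sqrt(Σ_i ‖x_i‖₁² + m‖p‖₁²) restricted to nonnegative vectors and Y = [−1,1]^{2mn} with the Euclidean norm, satisfies the Lipschitz-gradient cross-bound: for all x, y, y′, ‖∇_x f(x,y) − ∇_x f(x,y′)‖_{X*} ≤ √2 ‖y − y′‖₂. -/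
/-- For the bilinear function `f(x,y) = yᵀ𝐀x`, with `∇ₓ f(x,y) = 𝐀ᵀy` and dual
norm `‖s‖_{X*} = max{⟨s,x⟩ : ‖x‖_X ≤ 1, x ≥ 0}`, one has
`‖∇ₓ f(x,y) − ∇ₓ f(x,y′)‖_{X*} ≤ √2 ‖y − y′‖₂`.  Spelled out: for every
nonnegative `x = (x₁,…,x_m,p)` with `Σᵢ ‖xᵢ‖₁² + m‖p‖₁² ≤ 1` and all
`y, y′ ∈ ℝ^{2mn}` (written as blocks `(ya i, yb i)`),
`⟨𝐀x, y − y′⟩ ≤ √2 ‖y − y′‖₂`. -/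
theorem cross_lipschitz_bound (n m : ℕ)
    (x : Fin m → Fin n → Fin n → ℝ) (p : Fin n → ℝ)
    (hx : ∀ i j k, 0 ≤ x i j k) (hp : ∀ j, 0 ≤ p j)
    (hnorm : (∑ i, (∑ j, ∑ k, x i j k) ^ 2) + m * (∑ j, p j) ^ 2 ≤ 1)
    (ya ya' yb yb' : Fin m → Fin n → ℝ) :
    (∑ i, ((∑ j, ((∑ k, x i j k) - p j) * (ya i j - ya' i j)) +
           ∑ k, (∑ j, x i j k) * (yb i k - yb' i k)))
      ≤ Real.sqrt 2 *
        Real.sqrt (∑ i, ((∑ j, (ya i j - ya' i j) ^ 2) +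
                         ∑ k, (yb i k - yb' i k) ^ 2)) := by
  classical
  set A : Fin m → Fin n ⊕ Fin n → ℝ :=
    fun i => Sum.elim (fun j => (∑ k, x i j k) - p j) (fun k => ∑ j, x i j k) with hA
  set B : Fin m → Fin n ⊕ Fin n → ℝ :=
    fun i => Sum.elim (fun j => ya i j - ya' i j) (fun k => yb i k - yb' i k) with hB
  have hLHS : (∑ i, ((∑ j, ((∑ k, x i j k) - p j) * (ya i j - ya' i j)) +
           ∑ k, (∑ j, x i j k) * (yb i k - yb' i k)))
      = ∑ z : Fin m × (Fin n ⊕ Fin n), A z.1 z.2 * B z.1 z.2 := by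
    rw [Fintype.sum_prod_type]
    refine Finset.sum_congr rfl fun i _ => ?_
    rw [Fintype.sum_sum_type]
    simp [hA, hB]
  have hY : (∑ i, ((∑ j, (ya i j - ya' i j) ^ 2) + ∑ k, (yb i k - yb' i k) ^ 2))
      = ∑ z : Fin m × (Fin n ⊕ Fin n), B z.1 z.2 ^ 2 := by
    rw [Fintype.sum_prod_type]
    refine Finset.sum_congr rfl fun i _ => ?_
    rw [Fintype.sum_sum_type]
    simp [hB]
  -- bound on ∑ A²
  have hAsq : (∑ z : Fin m × (Fin n ⊕ Fin n), A z.1 z.2 ^ 2) ≤ 2 := by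
    have key : ∀ i, (∑ s : Fin n ⊕ Fin n, A i s ^ 2)
        ≤ 2 * (∑ j, ∑ k, x i j k) ^ 2 + (∑ j, p j) ^ 2 := by
      intro i
      rw [Fintype.sum_sum_type]
      have h1 : (∑ j, ((∑ k, x i j k) - p j) ^ 2)
          ≤ (∑ j, (∑ k, x i j k) ^ 2) + ∑ j, p j ^ 2 := by
        rw [← Finset.sum_add_distrib]
        refine Finset.sum_le_sum fun j _ => ?_
        have hX : 0 ≤ ∑ k, x i j k := Finset.sum_nonneg fun k _ => hx i j k
        nlinarith [mul_nonneg hX (hp j)]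
      have h2 : (∑ j, (∑ k, x i j k) ^ 2) ≤ (∑ j, ∑ k, x i j k) ^ 2 :=
        Finset.sum_sq_le_sq_sum_of_nonneg fun j _ =>
          Finset.sum_nonneg fun k _ => hx i j k
      have h3 : (∑ j, p j ^ 2) ≤ (∑ j, p j) ^ 2 :=
        Finset.sum_sq_le_sq_sum_of_nonneg fun j _ => hp j
      have h4 : (∑ k : Fin n, (∑ j, x i j k) ^ 2) ≤ (∑ j, ∑ k, x i j k) ^ 2 := by
        have := Finset.sum_sq_le_sq_sum_of_nonneg
          (s := (Finset.univ : Finset (Fin n))) (f := fun k => ∑ j, x i j k)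
          (fun k _ => Finset.sum_nonneg fun j _ => hx i j k)
        rwa [Finset.sum_comm] at this
      simp only [hA, Sum.elim_inl, Sum.elim_inr]
      linarith
    have hsum : (∑ z : Fin m × (Fin n ⊕ Fin n), A z.1 z.2 ^ 2)
        ≤ ∑ i, (2 * (∑ j, ∑ k, x i j k) ^ 2 + (∑ j, p j) ^ 2) := by
      rw [Fintype.sum_prod_type]
      exact Finset.sum_le_sum fun i _ => key i
    have hm : (∑ i : Fin m, (2 * (∑ j, ∑ k, x i j k) ^ 2 + (∑ j, p j) ^ 2))
        = 2 * (∑ i, (∑ j, ∑ k, x i j k) ^ 2) + m * (∑ j, p j) ^ 2 := by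
      rw [Finset.sum_add_distrib, ← Finset.mul_sum, Finset.sum_const, Finset.card_univ,
        Fintype.card_fin, nsmul_eq_mul]
    have hpsq : (0:ℝ) ≤ m * (∑ j, p j) ^ 2 :=
      mul_nonneg (Nat.cast_nonneg m) (sq_nonneg _)
    nlinarith
  -- Cauchy-Schwarz
  have hCS := Finset.sum_mul_sq_le_sq_mul_sq Finset.univ
    (fun z : Fin m × (Fin n ⊕ Fin n) => A z.1 z.2) (fun z => B z.1 z.2)
  have hBsq : (0:ℝ) ≤ ∑ z : Fin m × (Fin n ⊕ Fin n), B z.1 z.2 ^ 2 :=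
    Finset.sum_nonneg fun z _ => sq_nonneg _
  rw [hLHS, hY]
  have h1 : (∑ z : Fin m × (Fin n ⊕ Fin n), A z.1 z.2 * B z.1 z.2)
      ≤ Real.sqrt ((∑ z : Fin m × (Fin n ⊕ Fin n), A z.1 z.2 ^ 2) *
          ∑ z : Fin m × (Fin n ⊕ Fin n), B z.1 z.2 ^ 2) := by
    refine le_trans (le_abs_self _) ?_
    rw [← Real.sqrt_sq_eq_abs]
    exact Real.sqrt_le_sqrt hCS
  refine h1.trans ?_
  rw [Real.sqrt_mul (Finset.sum_nonneg fun z _ => sq_nonneg _)]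
  exact mul_le_mul_of_nonneg_right (Real.sqrt_le_sqrt hAsq) (Real.sqrt_nonneg _)
end

section
/- Let p ∈ Δ_n with p > 0 entrywise, and let y ∈ [−1,1]. Then for all real a, b, u, v and each index pair, (5a²)/p_j + 4 a b y + 2 b² p_j + 2 a v − 2 u b + (5u²)/p_j + 4 u v y + 2 v² p_j ≥ 0. -/
/-- Per-entry inequality underlying the positive semidefiniteness of the
remaining block in the area-convexity proof: for `p ∈ Δ_n` with `p > 0`,
`y ∈ [−1,1]`, all reals `a, b, u, v` and each index `j`,
`5a²/p_j + 4aby + 2b²p_j + 2av − 2ub + 5u²/p_j + 4uvy + 2v²p_j ≥ 0`. -/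
theorem area_convexity_entry_nonneg (n : ℕ) (p : Fin n → ℝ)
    (hp : ∀ j, 0 < p j) (hps : ∑ j, p j = 1)
    (y : ℝ) (hy : y ∈ Set.Icc (-1 : ℝ) 1) (a b u v : ℝ) (j : Fin n) :
    0 ≤ 5 * a ^ 2 / p j + 4 * a * b * y + 2 * b ^ 2 * p j + 2 * a * v - 2 * u * b
        + 5 * u ^ 2 / p j + 4 * u * v * y + 2 * v ^ 2 * p j := by
  have hpj := hp j
  obtain ⟨hy1, hy2⟩ := hy
  have key : 0 ≤ (2*a*y + b*(p j))^2 + (2*u*y + v*(p j))^2 + (a + v*(p j))^2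
      + (u - b*(p j))^2 + 4*(1 - y^2)*(a^2 + u^2) := by
    have h1 : 0 ≤ 1 - y^2 := by nlinarith
    positivity
  have : 5 * a ^ 2 / p j + 4 * a * b * y + 2 * b ^ 2 * p j + 2 * a * v - 2 * u * b
        + 5 * u ^ 2 / p j + 4 * u * v * y + 2 * v ^ 2 * p j
      = ((2*a*y + b*(p j))^2 + (2*u*y + v*(p j))^2 + (a + v*(p j))^2
      + (u - b*(p j))^2 + 4*(1 - y^2)*(a^2 + u^2)) / p j := by
    field_simp
    ring
  rw [this]
  positivity
end

section
/- Suppose F(x,y) is convex in x, concave in y, and (L_{xx}, L_{xy}, L_{yx}, L_{yy})-smooth with respect to norms ‖·‖_X, ‖·‖_Y on compact convex sets X, Y with Bregman radii R_X, R_Y. Then mirror prox on Z = X×Y with Bregman divergence B_Z(z,z̆) = (1/R_X²)B_X(x,x̆) + (1/R_Y²)B_Y(y,y̆) and step η = 1/(2 max{L_{xx}R_X², L_{xy}R_XR_Y, L_{yx}R_YR_X, L_{yy}R_Y²}) outputs averaged iterates (x̃,ỹ) satisfying max_{y∈Y}F(x̃,y) − min_{x∈X}F(x,ỹ) ≤ ε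 after N = (4/ε)·max{L_{xx}R_X², L_{xy}R_XR_Y, L_{yx}R_YR_X, L_{yy}R_Y²} iterations. -/
open RealInnerProductSpace

open Filter

set_option maxHeartbeats 1000000
open RealInnerProductSpace Filter

open RealInnerProductSpace Filter

section Helpers

lemma deriv_le_of_slope_le {ψ : ℝ → ℝ} {m C : ℝ} (hd : HasDerivAt ψ m 0)
    (h : ∀ t : ℝ, t ∈ Set.Ioc (0:ℝ) 1 → ψ t - ψ 0 ≤ t * C) : m ≤ C := by
  have hslope : Tendsto (slope ψ 0) (nhdsWithin 0 {(0:ℝ)}ᶜ) (nhds m) :=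
    hasDerivAt_iff_tendsto_slope.1 hd
  have hslope' : Tendsto (slope ψ 0) (nhdsWithin (0:ℝ) (Set.Ioi 0)) (nhds m) :=
    hslope.mono_left (nhdsWithin_mono _ (fun t ht => ne_of_gt ht))
  have hev : ∀ᶠ t in nhdsWithin (0:ℝ) (Set.Ioi 0), slope ψ 0 t ≤ C := by
    filter_upwards [Ioc_mem_nhdsGT_of_mem (by norm_num : (0:ℝ) ∈ Set.Ico (0:ℝ) 1)] with t ht
    have ht0 : 0 < t := ht.1
    have h2 := h t ht
    rw [slope_def_field, div_le_iff₀ (by simpa using ht0)]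
    simp only [sub_zero]
    nlinarith
  exact le_of_tendsto hslope' hev

variable {E : Type*} [NormedAddCommGroup E] [InnerProductSpace ℝ E] [CompleteSpace E]

lemma hasDerivAt_line {f : E → ℝ} {g w : E} (hf : HasGradientAt f g w) (z : E) :
    HasDerivAt (fun t : ℝ => f (w + t • z)) ⟪g, z⟫ 0 := by
  have hline : HasDerivAt (fun t : ℝ => w + t • z) z 0 := by
    simpa using ((hasDerivAt_id (0:ℝ)).smul_const z).const_add w
  have hF : HasFDerivAt f ((InnerProductSpace.toDual ℝ E) g) (w + (0:ℝ) • z) := by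
    simpa using hf.hasFDerivAt
  have := hF.comp_hasDerivAt 0 hline
  simp only [InnerProductSpace.toDual_apply_apply] at this
  exact this

omit [CompleteSpace E] in
lemma seg_mem {X : Set E} (hXc : Convex ℝ X) {w x : E} (hw : w ∈ X) (hx : x ∈ X)
    {t : ℝ} (h0 : 0 ≤ t) (h1 : t ≤ 1) : w + t • (x - w) ∈ X := by
  have : (1 - t) • w + t • x = w + t • (x - w) := by
    rw [sub_smul, one_smul, smul_sub]; abel
  rw [← this]
  exact hXc hw hx (by linarith) h0 (by ring)

/-- First-order optimality condition for minimizing `ξ ↦ ⟪a, ξ⟫ + c * d ξ` over a convex set. -/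
lemma opt_cond {X : Set E} (hXc : Convex ℝ X)
    {d : E → ℝ} {gd : E → E} {w : E} (hgd : HasGradientAt d (gd w) w)
    {a : E} {c : ℝ} (hw : w ∈ X)
    (hmin : ∀ ξ ∈ X, ⟪a, w⟫ + c * d w ≤ ⟪a, ξ⟫ + c * d ξ)
    {x : E} (hx : x ∈ X) : 0 ≤ ⟪a, x - w⟫ + c * ⟪gd w, x - w⟫ := by
  set z := x - w with hz
  have hlin : HasDerivAt (fun t : ℝ => ⟪a, w + t • z⟫) ⟪a, z⟫ 0 := by
    have : (fun t : ℝ => ⟪a, w + t • z⟫) = fun t : ℝ => ⟪a, w⟫ + t * ⟪a, z⟫ := by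
      funext t; rw [inner_add_right, real_inner_smul_right]
    rw [this]
    simpa using ((hasDerivAt_id (0:ℝ)).mul_const ⟪a, z⟫).const_add ⟪a, w⟫
  have hdd : HasDerivAt (fun t : ℝ => c * d (w + t • z)) (c * ⟪gd w, z⟫) 0 :=
    (hasDerivAt_line hgd z).const_mul c
  have hψ : HasDerivAt (fun t : ℝ => -(⟪a, w + t • z⟫ + c * d (w + t • z)))
      (-(⟪a, z⟫ + c * ⟪gd w, z⟫)) 0 := (hlin.add hdd).neg
  have hle : -(⟪a, z⟫ + c * ⟪gd w, z⟫) ≤ 0 := by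
    apply deriv_le_of_slope_le hψ
    intro t ht
    have hmem : w + t • z ∈ X := seg_mem hXc hw hx (le_of_lt ht.1) ht.2
    have := hmin _ hmem
    have h0 : w + (0:ℝ) • z = w := by simp
    simp only [h0] at *
    nlinarith
  linarith

/-- Supporting-hyperplane inequality for a convex function with a gradient. -/
lemma convex_support {X : Set E} (hXc : Convex ℝ X)
    {f : E → ℝ} {g w : E} (hf : ConvexOn ℝ X f) (hgrad : HasGradientAt f g w)
    (hw : w ∈ X) {x : E} (hx : x ∈ X) : f w + ⟪g, x - w⟫ ≤ f x := by
  set z := x - w with hz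
  have hψ : HasDerivAt (fun t : ℝ => f (w + t • z)) ⟪g, z⟫ 0 := hasDerivAt_line hgrad z
  have hle : ⟪g, z⟫ ≤ f x - f w := by
    apply deriv_le_of_slope_le hψ
    intro t ht
    obtain ⟨ht0, ht1⟩ := ht
    have hcvx := hf.2 hw hx (by linarith : (0:ℝ) ≤ 1 - t) (le_of_lt ht0) (by ring)
    have heq : (1 - t) • w + t • x = w + t • z := by
      rw [hz, sub_smul, one_smul, smul_sub]; abel
    rw [heq] at hcvx
    simp only [smul_eq_mul] at hcvx
    have h0 : w + (0:ℝ) • z = w := by simp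
    rw [h0]
    calc f (w + t • z) - f w ≤ ((1-t) * f w + t * f x) - f w := by linarith
      _ = t * (f x - f w) := by ring
  linarith

lemma hasGradientAt_neg {f : E → ℝ} {g v : E} (h : HasGradientAt f g v) :
    HasGradientAt (fun y => -(f y)) (-g) v := by
  have := h.hasFDerivAt.neg
  rw [hasGradientAt_iff_hasFDerivAt, map_neg]
  exact this

omit [CompleteSpace E] in
lemma bregman_three_point {dd : E → ℝ} {gd : E → E} {B : E → E → ℝ}
    (hB : ∀ x x', B x x' = dd x - dd x' - ⟪gd x', x - x'⟫) (a w b : E) :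
    ⟪gd w, a - w⟫ - ⟪gd b, a - w⟫ = B a b - B w b - B a w := by
  have h1 : ⟪gd b, a - b⟫ - ⟪gd b, w - b⟫ = ⟪gd b, a - w⟫ := by
    rw [← inner_sub_right]; congr 1; abel
  rw [hB a b, hB w b, hB a w]
  linarith [h1]

omit [CompleteSpace E] in
/-- Key segment lemma: if `t * P ≤ K * nn (t • (r - q))` for all `t ∈ [0,1]`, then the
*backward* Bregman divergence `B q r` is at least `P^2/(2K^2)`. By dyadic subdivision. -/
lemma segment_bregman {X : Set E} (hXc : Convex ℝ X)
    {dd : E → ℝ} {gd : E → E} {B : E → E → ℝ}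
    (hB : ∀ x x', B x x' = dd x - dd x' - ⟪gd x', x - x'⟫)
    {nn : E → ℝ}
    (hsc : ∀ x ∈ X, ∀ x' ∈ X, (1/2) * nn (x - x') ^ 2 ≤ B x x')
    {q r : E} (hq : q ∈ X) (hr : r ∈ X)
    {K P : ℝ} (hK : 0 ≤ K) (hP : 0 ≤ P)
    (hLip : ∀ t : ℝ, 0 ≤ t → t ≤ 1 → t * P ≤ K * nn (t • (r - q))) :
    P ^ 2 ≤ 2 * K ^ 2 * B q r := by
  set μ := r - q with hμ
  set z : ℝ → E := fun t => q + t • μ with hzdef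
  have hzmem : ∀ t : ℝ, 0 ≤ t → t ≤ 1 → z t ∈ X := fun t h0 h1 => seg_mem hXc hq hr h0 h1
  have hzsub : ∀ a b : ℝ, z a - z b = (a - b) • μ := by
    intro a b; simp only [hzdef, sub_smul]; abel
  set D : ℝ → ℝ := fun t => dd (z t) with hD
  set G : ℝ → ℝ := fun t => ⟪gd (z t), μ⟫ with hG
  have hBseg : ∀ s t : ℝ, B (z s) (z t) = D s - D t - (s - t) * G t := by
    intro s t
    rw [hB, hzsub, real_inner_smul_right]
  rcases eq_or_lt_of_le hK with hK0 | hKpos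
  · have h1 := hLip 1 (by norm_num) (by norm_num)
    rw [← hK0] at h1
    have hP0 : P = 0 := le_antisymm (by linarith) hP
    rw [hP0, ← hK0]
    nlinarith
  · set c := P ^ 2 / (2 * K ^ 2) with hc
    have hcnn : 0 ≤ c := by positivity
    have hforward : ∀ a b : ℝ, 0 ≤ a → a ≤ b → b ≤ 1 →
        c * (b - a) ^ 2 ≤ B (z b) (z a) := by
      intro a b h0 hab h1
      have hL := hLip (b - a) (by linarith) (by linarith)
      have hsc' := hsc (z b) (hzmem b (by linarith) h1) (z a) (hzmem a h0 (by linarith))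
      rw [hzsub] at hsc'
      have hnn : 0 ≤ (b - a) * P := mul_nonneg (by linarith) hP
      have hsq : ((b - a) * P) ^ 2 ≤ (K * nn ((b - a) • μ)) ^ 2 := by
        nlinarith [hL, hnn]
      have hK2 : 0 < K ^ 2 := by positivity
      rw [hc, div_mul_eq_mul_div, div_le_iff₀ (by positivity)]
      nlinarith [hsc', hsq]
    have hind : ∀ n : ℕ, ∀ a b : ℝ, 0 ≤ a → a ≤ b → b ≤ 1 →
        (1 - (3/4 : ℝ) ^ n) * c * (b - a) ^ 2 ≤ B (z a) (z b) := by
      intro n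
      induction n with
      | zero =>
        intro a b h0 hab h1
        have hsc' := hsc (z a) (hzmem a h0 (by linarith)) (z b) (hzmem b (by linarith) h1)
        nlinarith [sq_nonneg (nn (z a - z b))]
      | succ n ih =>
        intro a b h0 hab h1
        set m := (a + b) / 2 with hm
        have h0m : 0 ≤ m := by rw [hm]; linarith
        have ham : a ≤ m := by rw [hm]; linarith
        have hmb : m ≤ b := by rw [hm]; linarith
        have hm1 : m ≤ 1 := by rw [hm]; linarith
        have hid : B (z a) (z b) =
            B (z a) (z m) + 2 * B (z m) (z b) + B (z b) (z m) := by
          rw [hBseg, hBseg, hBseg, hBseg, hm]; ring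
        have i1 := ih a m h0 ham hm1
        have i2 := ih m b h0m hmb h1
        have i3 := hforward m b h0m hmb h1
        have hq34 : (0:ℝ) ≤ (3/4 : ℝ) ^ n := by positivity
        have hq34' : (3/4 : ℝ) ^ n ≤ 1 := pow_le_one₀ (by norm_num) (by norm_num)
        have hbm : b - m = (b - a) / 2 := by rw [hm]; ring
        have hma : m - a = (b - a) / 2 := by rw [hm]; ring
        rw [hid]
        rw [hbm] at i2 i3
        rw [hma] at i1
        have hpow : (3/4 : ℝ) ^ (n + 1) = (3/4) * (3/4 : ℝ) ^ n := by ring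
        rw [hpow]
        nlinarith [sq_nonneg (b - a), mul_nonneg hcnn (sq_nonneg (b-a))]
    have hlim : c ≤ B q r := by
      have hz0 : z 0 = q := by simp [hzdef]
      have hz1 : z 1 = r := by simp [hzdef, hμ]
      have hseq : ∀ n : ℕ, (1 - (3/4 : ℝ) ^ n) * c ≤ B q r := by
        intro n
        have := hind n 0 1 le_rfl zero_le_one le_rfl
        rw [hz0, hz1] at this
        simpa using this
      have htend : Tendsto (fun n : ℕ => (1 - (3/4 : ℝ) ^ n) * c) atTop (nhds c) := by
        have h34 : Tendsto (fun n : ℕ => (3/4 : ℝ) ^ n) atTop (nhds 0) :=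
          tendsto_pow_atTop_nhds_zero_of_lt_one (by norm_num) (by norm_num)
        have h2 : Tendsto (fun n : ℕ => (1 : ℝ) - (3/4 : ℝ) ^ n) atTop (nhds (1 - 0)) :=
          Tendsto.sub tendsto_const_nhds h34
        have h3 := h2.mul_const c
        simpa using h3
      exact le_of_tendsto htend (Filter.Eventually.of_forall hseq)
    rw [hc, div_le_iff₀ (by positivity)] at hlim
    linarith

end Helpers

lemma amgm_aux {x u v : ℝ} (hu : 0 ≤ u) (hv : 0 ≤ v) (h : x^2 ≤ 4*u*v) : x ≤ u + v := by
  rcases le_or_gt x 0 with hx | hx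
  · linarith
  · refine le_of_pow_le_pow_left₀ two_ne_zero (by positivity) ?_
    nlinarith [sq_nonneg (u - v)]

/-- scalar budget bound for residual terms (AM–GM etc.). -/
lemma res_budget {η K R RX RY B2 a1 b1 Bu Bv : ℝ}
    (hRX : 0 < RX) (hRY : 0 < RY) (hη : 0 < η)
    (hK : 0 ≤ K) (hB2 : 0 ≤ B2) (ha1 : 0 ≤ a1) (hb1 : 0 ≤ b1)
    (hBu : 0 ≤ Bu) (hBv : 0 ≤ Bv)
    (hcase : R ≤ 0 ∨ R ^ 2 ≤ 2 * K ^ 2 * B2)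
    (hKb : 2 * (RX^2 * RY) * (η * K) ≤ a1 * RY + b1 * RX)
    (ha : a1 ^ 2 ≤ 2 * Bu) (hb : b1 ^ 2 ≤ 2 * Bv) :
    η * R ≤ (1/2) * ((1/RX^2) * Bu) + (1/2) * ((1/RY^2) * Bv) + (1/RX^2) * B2 := by
  have hRX2 : (0:ℝ) < RX^2 := by positivity
  have hRY2 : (0:ℝ) < RY^2 := by positivity
  have hkey : η * R * (RX^2 * RY^2) ≤ RY^2 * Bu / 2 + RX^2 * Bv / 2 + RY^2 * B2 := by
    rcases hcase with h | h
    · have h1 : η * R * (RX^2 * RY^2) ≤ 0 := by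
        apply mul_nonpos_of_nonpos_of_nonneg
        · exact mul_nonpos_of_nonneg_of_nonpos hη.le h
        · positivity
      nlinarith
    · have hUnn : 0 ≤ a1 * RY + b1 * RX := by positivity
      have hL' : (0:ℝ) ≤ 2 * (RX^2*RY) * (η*K) := by positivity
      have hsq2 : (2 * (RX^2*RY) * (η*K))^2 ≤ (a1 * RY + b1 * RX)^2 :=
        pow_le_pow_left₀ hL' hKb 2
      have hsq1 : (η * R * (RX^2*RY^2))^2
          ≤ 2 * (η*K*(RX^2*RY))^2 * (B2*RY^2) := by
        nlinarith [mul_le_mul_of_nonneg_left h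
          (show (0:ℝ) ≤ η^2*(RX^2*RY^2)^2 by positivity)]
      have h5 := mul_le_mul_of_nonneg_right hsq2 (show (0:ℝ) ≤ B2*RY^2 by positivity)
      have h4uv : (η * R * (RX^2*RY^2)) ^ 2
          ≤ 4 * ((a1 * RY + b1 * RX)^2/8) * (B2 * RY^2) := by
        nlinarith [hsq1, h5]
      have hu : (0:ℝ) ≤ (a1 * RY + b1 * RX)^2/8 := by positivity
      have hv : (0:ℝ) ≤ B2 * RY^2 := by positivity
      have hamgm : η * R * (RX^2*RY^2) ≤ (a1 * RY + b1 * RX)^2/8 + B2 * RY^2 :=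
        amgm_aux hu hv h4uv
      have hU28 : (a1 * RY + b1 * RX)^2/8 ≤ RY^2 * Bu / 2 + RX^2 * Bv / 2 := by
        nlinarith [sq_nonneg (a1 * RY - b1 * RX),
          mul_le_mul_of_nonneg_right ha (le_of_lt hRY2),
          mul_le_mul_of_nonneg_right hb (le_of_lt hRX2)]
      nlinarith [hamgm, hU28]
  have hpos : (0:ℝ) < RX^2 * RY^2 := by positivity
  have h2 : η * R ≤ (RY^2 * Bu / 2 + RX^2 * Bv / 2 + RY^2 * B2) / (RX^2 * RY^2) := by
    rw [le_div_iff₀ hpos]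
    linarith [hkey]
  calc η * R ≤ (RY^2 * Bu / 2 + RX^2 * Bv / 2 + RY^2 * B2) / (RX^2 * RY^2) := h2
    _ = (1/2) * ((1/RX^2) * Bu) + (1/2) * ((1/RY^2) * Bv) + (1/RX^2) * B2 := by
        field_simp

/-- One step of mirror prox: the per-iteration descent inequality. -/
lemma per_step
    {E F : Type*} [NormedAddCommGroup E] [InnerProductSpace ℝ E] [CompleteSpace E]
    [NormedAddCommGroup F] [InnerProductSpace ℝ F] [CompleteSpace F]
    {X : Set E} {Y : Set F} (hXc : Convex ℝ X) (hYc : Convex ℝ Y)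
    {nX : E → ℝ} {nY : F → ℝ} (hnX : ∀ w, 0 ≤ nX w) (hnY : ∀ w, 0 ≤ nY w)
    {φ : E → F → ℝ} {gx : E → F → E} {gy : E → F → F}
    (hgx : ∀ x ∈ X, ∀ y ∈ Y, HasGradientAt (fun x' => φ x' y) (gx x y) x)
    (hgy : ∀ x ∈ X, ∀ y ∈ Y, HasGradientAt (fun y' => φ x y') (gy x y) y)
    (hconv : ∀ y ∈ Y, ConvexOn ℝ X (fun x => φ x y))
    (hconc : ∀ x ∈ X, ConcaveOn ℝ Y (fun y => φ x y))
    {Lxx Lxy Lyx Lyy RX RY : ℝ}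
    (hLxx : ∀ x ∈ X, ∀ x' ∈ X, ∀ y ∈ Y, ∀ w : E,
      ⟪gx x y - gx x' y, w⟫ ≤ Lxx * nX (x - x') * nX w)
    (hLxy : ∀ x ∈ X, ∀ y ∈ Y, ∀ y' ∈ Y, ∀ w : E,
      ⟪gx x y - gx x y', w⟫ ≤ Lxy * nY (y - y') * nX w)
    (hLyx : ∀ x ∈ X, ∀ x' ∈ X, ∀ y ∈ Y, ∀ w : F,
      ⟪gy x y - gy x' y, w⟫ ≤ Lyx * nX (x - x') * nY w)
    (hLyy : ∀ x ∈ X, ∀ y ∈ Y, ∀ y' ∈ Y, ∀ w : F,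
      ⟪gy x y - gy x y', w⟫ ≤ Lyy * nY (y - y') * nY w)
    {dX : E → ℝ} {dY : F → ℝ} {gdX : E → E} {gdY : F → F}
    (hgdX : ∀ x ∈ X, HasGradientAt dX (gdX x) x)
    (hgdY : ∀ y ∈ Y, HasGradientAt dY (gdY y) y)
    {BX : E → E → ℝ} {BY : F → F → ℝ}
    (hBX : ∀ x x', BX x x' = dX x - dX x' - ⟪gdX x', x - x'⟫)
    (hBY : ∀ y y', BY y y' = dY y - dY y' - ⟪gdY y', y - y'⟫)
    (hscX : ∀ x ∈ X, ∀ x' ∈ X, (1 / 2) * nX (x - x') ^ 2 ≤ BX x x')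
    (hscY : ∀ y ∈ Y, ∀ y' ∈ Y, (1 / 2) * nY (y - y') ^ 2 ≤ BY y y')
    (hRXpos : 0 < RX) (hRYpos : 0 < RY)
    {η : ℝ} (hηpos : 0 < η)
    (hηLxx : 2 * RX^2 * (η * Lxx) ≤ 1) (hηLxy : 2 * (RX*RY) * (η * Lxy) ≤ 1)
    (hηLyx : 2 * (RX*RY) * (η * Lyx) ≤ 1) (hηLyy : 2 * RY^2 * (η * Lyy) ≤ 1)
    {p u x' : E} {q0 v y' : F} (hp : p ∈ X) (hu : u ∈ X) (hx' : x' ∈ X)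
    (hq0 : q0 ∈ Y) (hv : v ∈ Y) (hy' : y' ∈ Y)
    (hstep1' : ∀ ξ ∈ X, ∀ ζ ∈ Y,
      η * (⟪gx p q0, u⟫ - ⟪gy p q0, v⟫) + (1/RX^2) * BX u p + (1/RY^2) * BY v q0
        ≤ η * (⟪gx p q0, ξ⟫ - ⟪gy p q0, ζ⟫) + (1/RX^2) * BX ξ p + (1/RY^2) * BY ζ q0)
    (hstep2' : ∀ ξ ∈ X, ∀ ζ ∈ Y,
      η * (⟪gx u v, x'⟫ - ⟪gy u v, y'⟫) + (1/RX^2) * BX x' p + (1/RY^2) * BY y' q0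
        ≤ η * (⟪gx u v, ξ⟫ - ⟪gy u v, ζ⟫) + (1/RX^2) * BX ξ p + (1/RY^2) * BY ζ q0)
    {x : E} {y : F} (hx : x ∈ X) (hy : y ∈ Y) :
    η * (φ u y - φ x v)
      ≤ ((1/RX^2) * BX x p + (1/RY^2) * BY y q0)
        - ((1/RX^2) * BX x x' + (1/RY^2) * BY y y') := by
  have hRX2 : (0:ℝ) < RX^2 := by positivity
  have hRY2 : (0:ℝ) < RY^2 := by positivity
  have hBXnn : ∀ a ∈ X, ∀ b ∈ X, (0:ℝ) ≤ BX a b := by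
    intro a ha b hb
    have := hscX a ha b hb
    nlinarith [sq_nonneg (nX (a - b))]
  have hBYnn : ∀ a ∈ Y, ∀ b ∈ Y, (0:ℝ) ≤ BY a b := by
    intro a ha b hb
    have := hscY a ha b hb
    nlinarith [sq_nonneg (nY (a - b))]
  -- ### first-order optimality conditions
  -- step 1, x-part
  have B1x : 0 ≤ η * ⟪gx p q0, x' - u⟫ + (1/RX^2) * BX x' p
      - (1/RX^2) * BX u p - (1/RX^2) * BX x' u := by
    have hmin1x : ∀ ξ ∈ X,
        ⟪(η • gx p q0 - (1/RX^2) • gdX p : E), u⟫ + (1/RX^2) * dX u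
          ≤ ⟪(η • gx p q0 - (1/RX^2) • gdX p : E), ξ⟫ + (1/RX^2) * dX ξ := by
      intro ξ hξ
      have h := hstep1' ξ hξ v hv
      simp only [hBX, hBY, inner_sub_left, inner_sub_right, real_inner_smul_left] at h ⊢
      ring_nf at h ⊢
      linarith
    have O1 := opt_cond hXc (hgdX u hu) hu hmin1x hx'
    simp only [inner_sub_left, real_inner_smul_left] at O1
    have T1 := bregman_three_point hBX x' u p
    have T1' : (1/RX^2) * ⟪gdX u, x' - u⟫ - (1/RX^2) * ⟪gdX p, x' - u⟫
        = (1/RX^2) * BX x' p - (1/RX^2) * BX u p - (1/RX^2) * BX x' u := by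
      linear_combination (1/RX^2) * T1
    linarith
  -- step 1, y-part
  have B1y : 0 ≤ -(η * ⟪gy p q0, y' - v⟫) + (1/RY^2) * BY y' q0
      - (1/RY^2) * BY v q0 - (1/RY^2) * BY y' v := by
    have hmin1y : ∀ ζ ∈ Y,
        ⟪((-η) • gy p q0 - (1/RY^2) • gdY q0 : F), v⟫ + (1/RY^2) * dY v
          ≤ ⟪((-η) • gy p q0 - (1/RY^2) • gdY q0 : F), ζ⟫ + (1/RY^2) * dY ζ := by
      intro ζ hζ
      have h := hstep1' u hu ζ hζ
      simp only [hBX, hBY, inner_sub_left, inner_sub_right, real_inner_smul_left] at h ⊢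
      ring_nf at h ⊢
      linarith
    have O1 := opt_cond hYc (hgdY v hv) hv hmin1y hy'
    simp only [inner_sub_left, real_inner_smul_left] at O1
    have T1 := bregman_three_point hBY y' v q0
    have T1' : (1/RY^2) * ⟪gdY v, y' - v⟫ - (1/RY^2) * ⟪gdY q0, y' - v⟫
        = (1/RY^2) * BY y' q0 - (1/RY^2) * BY v q0 - (1/RY^2) * BY y' v := by
      linear_combination (1/RY^2) * T1
    linarith
  -- step 2, x-part
  have B2x : 0 ≤ η * ⟪gx u v, x - x'⟫ + (1/RX^2) * BX x p
      - (1/RX^2) * BX x' p - (1/RX^2) * BX x x' := by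
    have hmin2x : ∀ ξ ∈ X,
        ⟪(η • gx u v - (1/RX^2) • gdX p : E), x'⟫ + (1/RX^2) * dX x'
          ≤ ⟪(η • gx u v - (1/RX^2) • gdX p : E), ξ⟫ + (1/RX^2) * dX ξ := by
      intro ξ hξ
      have h := hstep2' ξ hξ y' hy'
      simp only [hBX, hBY, inner_sub_left, inner_sub_right, real_inner_smul_left] at h ⊢
      ring_nf at h ⊢
      linarith
    have O2 := opt_cond hXc (hgdX x' hx') hx' hmin2x hx
    simp only [inner_sub_left, real_inner_smul_left] at O2
    have T2 := bregman_three_point hBX x x' p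
    have T2' : (1/RX^2) * ⟪gdX x', x - x'⟫ - (1/RX^2) * ⟪gdX p, x - x'⟫
        = (1/RX^2) * BX x p - (1/RX^2) * BX x' p - (1/RX^2) * BX x x' := by
      linear_combination (1/RX^2) * T2
    linarith
  -- step 2, y-part
  have B2y : 0 ≤ -(η * ⟪gy u v, y - y'⟫) + (1/RY^2) * BY y q0
      - (1/RY^2) * BY y' q0 - (1/RY^2) * BY y y' := by
    have hmin2y : ∀ ζ ∈ Y,
        ⟪((-η) • gy u v - (1/RY^2) • gdY q0 : F), y'⟫ + (1/RY^2) * dY y'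
          ≤ ⟪((-η) • gy u v - (1/RY^2) • gdY q0 : F), ζ⟫ + (1/RY^2) * dY ζ := by
      intro ζ hζ
      have h := hstep2' x' hx' ζ hζ
      simp only [hBX, hBY, inner_sub_left, inner_sub_right, real_inner_smul_left] at h ⊢
      ring_nf at h ⊢
      linarith
    have O2 := opt_cond hYc (hgdY y' hy') hy' hmin2y hy
    simp only [inner_sub_left, real_inner_smul_left] at O2
    have T2 := bregman_three_point hBY y y' q0
    have T2' : (1/RY^2) * ⟪gdY y', y - y'⟫ - (1/RY^2) * ⟪gdY q0, y - y'⟫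
        = (1/RY^2) * BY y q0 - (1/RY^2) * BY y' q0 - (1/RY^2) * BY y y' := by
      linear_combination (1/RY^2) * T2
    linarith
  -- ### residual bounds
  -- x-side residual, via the segment lemma
  have RESx : η * ⟪gx u v - gx p q0, u - x'⟫
      ≤ (1/2) * ((1/RX^2) * BX u p) + (1/2) * ((1/RY^2) * BY v q0)
        + (1/RX^2) * BX x' u := by
    have hKnn : (0:ℝ) ≤ max (Lxx * nX (u - p) + Lxy * nY (v - q0)) 0 := le_max_right _ _
    have hLipx : ∀ t : ℝ, 0 ≤ t → t ≤ 1 →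
        t * ⟪gx u v - gx p q0, u - x'⟫
          ≤ (max (Lxx * nX (u - p) + Lxy * nY (v - q0)) 0) * nX (t • (u - x')) := by
      intro t ht0 ht1
      have e1 : t * ⟪gx u v - gx p q0, u - x'⟫ = ⟪gx u v - gx p q0, t • (u - x')⟫ := by
        rw [real_inner_smul_right]
      have hsplit : ⟪gx u v - gx p q0, t • (u - x')⟫
          = ⟪gx u v - gx p v, t • (u - x')⟫ + ⟪gx p v - gx p q0, t • (u - x')⟫ := by
        rw [← inner_add_left]; congr 1; abel
      have b1 := hLxx u hu p hp v hv (t • (u - x'))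
      have b2 := hLxy p hp v hv q0 hq0 (t • (u - x'))
      have b3 : (Lxx * nX (u - p) + Lxy * nY (v - q0)) * nX (t • (u - x'))
          ≤ (max (Lxx * nX (u - p) + Lxy * nY (v - q0)) 0) * nX (t • (u - x')) :=
        mul_le_mul_of_nonneg_right (le_max_left _ _) (hnX _)
      rw [e1, hsplit]
      nlinarith [b1, b2, b3]
    have hcasex : ⟪gx u v - gx p q0, u - x'⟫ ≤ 0 ∨
        ⟪gx u v - gx p q0, u - x'⟫ ^ 2
          ≤ 2 * (max (Lxx * nX (u - p) + Lxy * nY (v - q0)) 0) ^ 2 * BX x' u := by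
      rcases le_or_gt ⟪gx u v - gx p q0, u - x'⟫ 0 with h | h
      · exact Or.inl h
      · exact Or.inr (segment_bregman hXc hBX hscX hx' hu hKnn h.le hLipx)
    have hKbx : 2 * (RX^2 * RY) * (η * (max (Lxx * nX (u - p) + Lxy * nY (v - q0)) 0))
        ≤ nX (u - p) * RY + nY (v - q0) * RX := by
      rcases le_or_gt (Lxx * nX (u - p) + Lxy * nY (v - q0)) 0 with h | h
      · rw [max_eq_right h]
        have : (0:ℝ) ≤ nX (u - p) * RY + nY (v - q0) * RX := by
          have := hnX (u - p); have := hnY (v - q0); positivity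
        nlinarith
      · rw [max_eq_left h.le]
        have m1 := mul_le_mul_of_nonneg_right hηLxx
          (mul_nonneg (hnX (u - p)) hRYpos.le)
        have m2 := mul_le_mul_of_nonneg_right hηLxy
          (mul_nonneg (hnY (v - q0)) hRXpos.le)
        nlinarith [m1, m2]
    have ha2 : nX (u - p) ^ 2 ≤ 2 * BX u p := by
      have := hscX u hu p hp; linarith
    have hb2 : nY (v - q0) ^ 2 ≤ 2 * BY v q0 := by
      have := hscY v hv q0 hq0; linarith
    exact res_budget hRXpos hRYpos hηpos hKnn (hBXnn x' hx' u hu) (hnX _) (hnY _)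
      (hBXnn u hu p hp) (hBYnn v hv q0 hq0) hcasex hKbx ha2 hb2
  -- y-side residual (direct)
  have RESy : η * ⟪gy u v - gy p q0, y' - v⟫
      ≤ (1/2) * ((1/RY^2) * BY v q0) + (1/2) * ((1/RX^2) * BX u p)
        + (1/RY^2) * BY y' v := by
    have hKnn : (0:ℝ) ≤ max (Lyy * nY (v - q0) + Lyx * nX (u - p)) 0 := le_max_right _ _
    have hQb : ⟪gy u v - gy p q0, y' - v⟫
        ≤ (max (Lyy * nY (v - q0) + Lyx * nX (u - p)) 0) * nY (y' - v) := by
      have hsplit : ⟪gy u v - gy p q0, y' - v⟫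
          = ⟪gy u v - gy u q0, y' - v⟫ + ⟪gy u q0 - gy p q0, y' - v⟫ := by
        rw [← inner_add_left]; congr 1; abel
      have b1 := hLyy u hu v hv q0 hq0 (y' - v)
      have b2 := hLyx u hu p hp q0 hq0 (y' - v)
      have b3 : (Lyy * nY (v - q0) + Lyx * nX (u - p)) * nY (y' - v)
          ≤ (max (Lyy * nY (v - q0) + Lyx * nX (u - p)) 0) * nY (y' - v) :=
        mul_le_mul_of_nonneg_right (le_max_left _ _) (hnY _)
      rw [hsplit]
      nlinarith [b1, b2, b3]
    have hcasey : ⟪gy u v - gy p q0, y' - v⟫ ≤ 0 ∨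
        ⟪gy u v - gy p q0, y' - v⟫ ^ 2
          ≤ 2 * (max (Lyy * nY (v - q0) + Lyx * nX (u - p)) 0) ^ 2 * BY y' v := by
      rcases le_or_gt ⟪gy u v - gy p q0, y' - v⟫ 0 with h | h
      · exact Or.inl h
      · right
        have hn2 : nY (y' - v) ^ 2 ≤ 2 * BY y' v := by
          have := hscY y' hy' v hv; linarith
        have h1 : ⟪gy u v - gy p q0, y' - v⟫ ^ 2
            ≤ ((max (Lyy * nY (v - q0) + Lyx * nX (u - p)) 0) * nY (y' - v)) ^ 2 := by
          nlinarith [hQb, h]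
        nlinarith [h1, mul_le_mul_of_nonneg_left hn2 (sq_nonneg (max (Lyy * nY (v - q0) + Lyx * nX (u - p)) 0))]
    have hKby : 2 * (RY^2 * RX) * (η * (max (Lyy * nY (v - q0) + Lyx * nX (u - p)) 0))
        ≤ nY (v - q0) * RX + nX (u - p) * RY := by
      rcases le_or_gt (Lyy * nY (v - q0) + Lyx * nX (u - p)) 0 with h | h
      · rw [max_eq_right h]
        have : (0:ℝ) ≤ nY (v - q0) * RX + nX (u - p) * RY := by
          have := hnX (u - p); have := hnY (v - q0); positivity
        nlinarith
      · rw [max_eq_left h.le]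
        have m1 := mul_le_mul_of_nonneg_right hηLyy
          (mul_nonneg (hnY (v - q0)) hRXpos.le)
        have m2 := mul_le_mul_of_nonneg_right hηLyx
          (mul_nonneg (hnX (u - p)) hRYpos.le)
        nlinarith [m1, m2]
    have ha2 : nY (v - q0) ^ 2 ≤ 2 * BY v q0 := by
      have := hscY v hv q0 hq0; linarith
    have hb2 : nX (u - p) ^ 2 ≤ 2 * BX u p := by
      have := hscX u hu p hp; linarith
    exact res_budget hRYpos hRXpos hηpos hKnn (hBYnn y' hy' v hv) (hnY _) (hnX _)
      (hBYnn v hv q0 hq0) (hBXnn u hu p hp) hcasey hKby ha2 hb2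
  -- ### convexity / concavity gap bound
  have hgap : φ u y - φ x v ≤ ⟪gx u v, u - x⟫ - ⟪gy u v, v - y⟫ := by
    have hsup1 := convex_support hXc (hconv v hv) (hgx u hu v hv) hu hx
    have hsup2' := convex_support hYc ((hconc u hu).neg)
      (hasGradientAt_neg (hgy u hu v hv)) hv hy
    simp only [Pi.neg_apply, inner_neg_left] at hsup2'
    have e1 : ⟪gx u v, x - u⟫ = -⟪gx u v, u - x⟫ := by
      rw [show x - u = -(u - x) by abel, inner_neg_right]
    have e2 : ⟪gy u v, y - v⟫ = -⟪gy u v, v - y⟫ := by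
      rw [show y - v = -(v - y) by abel, inner_neg_right]
    rw [e1] at hsup1
    rw [e2] at hsup2'
    linarith
  -- ### assemble
  have hgapη : η * (φ u y - φ x v) ≤ η * (⟪gx u v, u - x⟫ - ⟪gy u v, v - y⟫) :=
    mul_le_mul_of_nonneg_left hgap hηpos.le
  have hEq1 : ⟪gx u v, u - x⟫
      = ⟪gx u v - gx p q0, u - x'⟫ - ⟪gx p q0, x' - u⟫ - ⟪gx u v, x - x'⟫ := by
    have e1 : ⟪gx p q0, u - x'⟫ + ⟪gx p q0, x' - u⟫ = 0 := by
      rw [← inner_add_right, show (u - x') + (x' - u) = (0:E) by abel, inner_zero_right]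
    have e2 : ⟪gx u v, u - x'⟫ - ⟪gx u v, x - x'⟫ = ⟪gx u v, u - x⟫ := by
      rw [← inner_sub_right]; congr 1; abel
    have e3 : ⟪gx u v - gx p q0, u - x'⟫ = ⟪gx u v, u - x'⟫ - ⟪gx p q0, u - x'⟫ := by
      rw [inner_sub_left]
    linarith
  have hEq2 : ⟪gy u v, v - y⟫
      = -⟪gy u v - gy p q0, y' - v⟫ - ⟪gy p q0, y' - v⟫ - ⟪gy u v, y - y'⟫ := by
    have e1 : ⟪gy u v, y' - v⟫ + ⟪gy u v, v - y'⟫ = 0 := by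
      rw [← inner_add_right, show (y' - v) + (v - y') = (0:F) by abel, inner_zero_right]
    have e2 : ⟪gy u v, v - y'⟫ - ⟪gy u v, y - y'⟫ = ⟪gy u v, v - y⟫ := by
      rw [← inner_sub_right]; congr 1; abel
    have e3 : ⟪gy u v - gy p q0, y' - v⟫ = ⟪gy u v, y' - v⟫ - ⟪gy p q0, y' - v⟫ := by
      rw [inner_sub_left]
    linarith
  have hEE : η * (⟪gx u v, u - x⟫ - ⟪gy u v, v - y⟫)
      = η * ⟪gx u v - gx p q0, u - x'⟫ - η * ⟪gx p q0, x' - u⟫ - η * ⟪gx u v, x - x'⟫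
        + η * ⟪gy u v - gy p q0, y' - v⟫ + η * ⟪gy p q0, y' - v⟫ + η * ⟪gy u v, y - y'⟫ := by
    linear_combination η * hEq1 - η * hEq2
  linarith [hgapη, hEE, B1x, B1y, B2x, B2y, RESx, RESy]

lemma centerMass_const_one {ι : Type*} {M : Type*} [AddCommGroup M] [Module ℝ M]
    (t : Finset ι) (z : ι → M) :
    t.centerMass (fun _ => (1:ℝ)) z = (t.card : ℝ)⁻¹ • ∑ i ∈ t, z i := by
  simp [Finset.centerMass]


/-- Mirror prox for convex-concave saddle-point problems.  `φ : X × Y → ℝ` is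
convex in `x`, concave in `y`, and `(Lxx, Lxy, Lyx, Lyy)`-smooth with respect
to norms `nX`, `nY` (smoothness stated in the equivalent dual-norm form, via
inner products against arbitrary test vectors).  The Bregman setup on
`Z = X × Y` uses `B_Z(z, z̆) = (1/R_X²)B_X(x, x̆) + (1/R_Y²)B_Y(y, y̆)` with
prox-functions `dX`, `dY` that are 1-strongly convex w.r.t. `nX`, `nY` and
have Bregman radii `R_X`, `R_Y`.  With step
`η = 1/(2 max{Lxx R_X², Lxy R_X R_Y, Lyx R_Y R_X, Lyy R_Y²})` and
`N ≥ (4/ε)·max{...}` iterations (with `z¹ = argmin d_Z`, and updates given as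
exact minimizers of the mirror-prox subproblems), the averaged iterates
`(x̃, ỹ)` satisfy `max_{y∈Y} φ(x̃,y) − min_{x∈X} φ(x,ỹ) ≤ ε`. -/
theorem mirror_prox_saddle_point
    {E F : Type*} [NormedAddCommGroup E] [InnerProductSpace ℝ E] [CompleteSpace E]
    [NormedAddCommGroup F] [InnerProductSpace ℝ F] [CompleteSpace F]
    (X : Set E) (Y : Set F)
    (hXc : Convex ℝ X) (hYc : Convex ℝ Y)
    (hXcp : IsCompact X) (hYcp : IsCompact Y)
    (hXne : X.Nonempty) (hYne : Y.Nonempty)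
    (nX : E → ℝ) (nY : F → ℝ)
    (hnX : ∀ w, 0 ≤ nX w) (hnY : ∀ w, 0 ≤ nY w)
    (φ : E → F → ℝ)
    (gx : E → F → E) (gy : E → F → F)
    (hgx : ∀ x ∈ X, ∀ y ∈ Y, HasGradientAt (fun x' => φ x' y) (gx x y) x)
    (hgy : ∀ x ∈ X, ∀ y ∈ Y, HasGradientAt (fun y' => φ x y') (gy x y) y)
    (hconv : ∀ y ∈ Y, ConvexOn ℝ X (fun x => φ x y))
    (hconc : ∀ x ∈ X, ConcaveOn ℝ Y (fun y => φ x y))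
    (Lxx Lxy Lyx Lyy RX RY : ℝ)
    -- `(Lxx, Lxy, Lyx, Lyy)`-smoothness in dual-norm form
    (hLxx : ∀ x ∈ X, ∀ x' ∈ X, ∀ y ∈ Y, ∀ w : E,
      ⟪gx x y - gx x' y, w⟫ ≤ Lxx * nX (x - x') * nX w)
    (hLxy : ∀ x ∈ X, ∀ y ∈ Y, ∀ y' ∈ Y, ∀ w : E,
      ⟪gx x y - gx x y', w⟫ ≤ Lxy * nY (y - y') * nX w)
    (hLyx : ∀ x ∈ X, ∀ x' ∈ X, ∀ y ∈ Y, ∀ w : F,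
      ⟪gy x y - gy x' y, w⟫ ≤ Lyx * nX (x - x') * nY w)
    (hLyy : ∀ x ∈ X, ∀ y ∈ Y, ∀ y' ∈ Y, ∀ w : F,
      ⟪gy x y - gy x y', w⟫ ≤ Lyy * nY (y - y') * nY w)
    -- prox-functions, their gradients and Bregman divergences
    (dX : E → ℝ) (dY : F → ℝ) (gdX : E → E) (gdY : F → F)
    (hgdX : ∀ x ∈ X, HasGradientAt dX (gdX x) x)
    (hgdY : ∀ y ∈ Y, HasGradientAt dY (gdY y) y)
    (BX : E → E → ℝ) (BY : F → F → ℝ)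
    (hBX : ∀ x x', BX x x' = dX x - dX x' - ⟪gdX x', x - x'⟫)
    (hBY : ∀ y y', BY y y' = dY y - dY y' - ⟪gdY y', y - y'⟫)
    -- 1-strong convexity of the prox-functions with respect to `nX`, `nY`
    (hscX : ∀ x ∈ X, ∀ x' ∈ X, (1 / 2) * nX (x - x') ^ 2 ≤ BX x x')
    (hscY : ∀ y ∈ Y, ∀ y' ∈ Y, (1 / 2) * nY (y - y') ^ 2 ≤ BY y y')
    -- Bregman radii
    (hRX : ∀ x ∈ X, ∀ x' ∈ X, dX x - dX x' ≤ RX ^ 2)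
    (hRY : ∀ y ∈ Y, ∀ y' ∈ Y, dY y - dY y' ≤ RY ^ 2)
    (hRXpos : 0 < RX) (hRYpos : 0 < RY)
    (ε : ℝ) (hε : 0 < ε)
    (L : ℝ)
    (hL : L = max (max (Lxx * RX ^ 2) (Lxy * RX * RY))
              (max (Lyx * RY * RX) (Lyy * RY ^ 2)))
    (hLpos : 0 < L)
    (η : ℝ) (hη : η = 1 / (2 * L))
    (N : ℕ) (hN : (4 / ε) * L ≤ N) (hN1 : 1 ≤ N)
    -- iterates: `z^k = (xk k, yk k)`, `(u^{k+1}, v^{k+1})` the intermediate points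
    (xk uk : ℕ → E) (yk vk : ℕ → F)
    (hxkX : ∀ k, xk k ∈ X) (hykY : ∀ k, yk k ∈ Y)
    (hukX : ∀ k, uk k ∈ X) (hvkY : ∀ k, vk k ∈ Y)
    -- `z¹ = argmin_{z ∈ Z} d_Z(z)`
    (hinit : ∀ x ∈ X, ∀ y ∈ Y,
      (1 / RX ^ 2) * dX (xk 1) + (1 / RY ^ 2) * dY (yk 1)
        ≤ (1 / RX ^ 2) * dX x + (1 / RY ^ 2) * dY y)
    -- `(u^{k+1}, v^{k+1}) = argmin_{z ∈ Z} { η⟨G(z^k), z⟩ + B_Z(z, z^k) }`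
    (hstep1 : ∀ k ≥ 1, ∀ x ∈ X, ∀ y ∈ Y,
      η * (⟪gx (xk k) (yk k), uk (k + 1)⟫ - ⟪gy (xk k) (yk k), vk (k + 1)⟫)
          + (1 / RX ^ 2) * BX (uk (k + 1)) (xk k)
          + (1 / RY ^ 2) * BY (vk (k + 1)) (yk k)
        ≤ η * (⟪gx (xk k) (yk k), x⟫ - ⟪gy (xk k) (yk k), y⟫)
          + (1 / RX ^ 2) * BX x (xk k) + (1 / RY ^ 2) * BY y (yk k))
    -- `z^{k+1} = argmin_{z ∈ Z} { η⟨G(u^{k+1}, v^{k+1}), z⟩ + B_Z(z, z^k) }`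
    (hstep2 : ∀ k ≥ 1, ∀ x ∈ X, ∀ y ∈ Y,
      η * (⟪gx (uk (k + 1)) (vk (k + 1)), xk (k + 1)⟫
            - ⟪gy (uk (k + 1)) (vk (k + 1)), yk (k + 1)⟫)
          + (1 / RX ^ 2) * BX (xk (k + 1)) (xk k)
          + (1 / RY ^ 2) * BY (yk (k + 1)) (yk k)
        ≤ η * (⟪gx (uk (k + 1)) (vk (k + 1)), x⟫
            - ⟪gy (uk (k + 1)) (vk (k + 1)), y⟫)
          + (1 / RX ^ 2) * BX x (xk k) + (1 / RY ^ 2) * BY y (yk k))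
    -- averaged output
    (xt : E) (yt : F)
    (hxt : xt = (N : ℝ)⁻¹ • ∑ k ∈ Finset.Icc 1 N, uk (k + 1))
    (hyt : yt = (N : ℝ)⁻¹ • ∑ k ∈ Finset.Icc 1 N, vk (k + 1)) :
    ∀ x ∈ X, ∀ y ∈ Y, φ xt y - φ x yt ≤ ε := by
  intro x hx y hy
  have hRX2 : (0:ℝ) < RX^2 := by positivity
  have hRY2 : (0:ℝ) < RY^2 := by positivity
  have hηpos : 0 < η := by rw [hη]; positivity
  -- η–L bounds
  have hLxxL : Lxx * RX ^ 2 ≤ L := by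
    rw [hL]; exact le_trans (le_max_left _ _) (le_max_left _ _)
  have hLxyL : Lxy * RX * RY ≤ L := by
    rw [hL]; exact le_trans (le_max_right _ _) (le_max_left _ _)
  have hLyxL : Lyx * RY * RX ≤ L := by
    rw [hL]; exact le_trans (le_max_left _ _) (le_max_right _ _)
  have hLyyL : Lyy * RY ^ 2 ≤ L := by
    rw [hL]; exact le_trans (le_max_right _ _) (le_max_right _ _)
  have hηLxx : 2 * RX^2 * (η * Lxx) ≤ 1 := by
    rw [hη]
    have e : 2 * RX^2 * (1/(2*L) * Lxx) = (Lxx * RX^2) / L := by field_simp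
    rw [e, div_le_one hLpos]; linarith
  have hηLxy : 2 * (RX*RY) * (η * Lxy) ≤ 1 := by
    rw [hη]
    have e : 2 * (RX*RY) * (1/(2*L) * Lxy) = (Lxy * RX * RY) / L := by field_simp
    rw [e, div_le_one hLpos]; linarith
  have hηLyx : 2 * (RX*RY) * (η * Lyx) ≤ 1 := by
    rw [hη]
    have e : 2 * (RX*RY) * (1/(2*L) * Lyx) = (Lyx * RY * RX) / L := by field_simp
    rw [e, div_le_one hLpos]; linarith
  have hηLyy : 2 * RY^2 * (η * Lyy) ≤ 1 := by
    rw [hη]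
    have e : 2 * RY^2 * (1/(2*L) * Lyy) = (Lyy * RY^2) / L := by field_simp
    rw [e, div_le_one hLpos]; linarith
  have hBXnn : ∀ a ∈ X, ∀ b ∈ X, (0:ℝ) ≤ BX a b := by
    intro a ha b hb
    have := hscX a ha b hb
    nlinarith [sq_nonneg (nX (a - b))]
  have hBYnn : ∀ a ∈ Y, ∀ b ∈ Y, (0:ℝ) ≤ BY a b := by
    intro a ha b hb
    have := hscY a ha b hb
    nlinarith [sq_nonneg (nY (a - b))]
  -- per-step inequality
  have key : ∀ k : ℕ, 1 ≤ k →
      η * (φ (uk (k+1)) y - φ x (vk (k+1)))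
        ≤ ((1/RX^2) * BX x (xk k) + (1/RY^2) * BY y (yk k))
          - ((1/RX^2) * BX x (xk (k+1)) + (1/RY^2) * BY y (yk (k+1))) := by
    intro k hk
    exact per_step hXc hYc hnX hnY hgx hgy hconv hconc hLxx hLxy hLyx hLyy hgdX hgdY
      hBX hBY hscX hscY hRXpos hRYpos hηpos hηLxx hηLxy hηLyx hηLyy
      (hxkX k) (hukX (k+1)) (hxkX (k+1)) (hykY k) (hvkY (k+1)) (hykY (k+1))
      (fun ξ hξ ζ hζ => hstep1 k hk ξ hξ ζ hζ)
      (fun ξ hξ ζ hζ => hstep2 k hk ξ hξ ζ hζ)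
      hx hy
  -- initial-point optimality
  have hiox : 0 ≤ ⟪gdX (xk 1), x - xk 1⟫ := by
    have hmin : ∀ ξ ∈ X, ⟪(0:E), xk 1⟫ + (1/RX^2) * dX (xk 1)
        ≤ ⟪(0:E), ξ⟫ + (1/RX^2) * dX ξ := by
      intro ξ hξ
      have h := hinit ξ hξ (yk 1) (hykY 1)
      simp only [inner_zero_left]
      linarith
    have h := opt_cond hXc (hgdX (xk 1) (hxkX 1)) (hxkX 1) hmin hx
    simp only [inner_zero_left, zero_add] at h
    by_contra hcon
    push_neg at hcon
    have : (1/RX^2) * ⟪gdX (xk 1), x - xk 1⟫ < 0 :=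
      mul_neg_of_pos_of_neg (by positivity) hcon
    linarith
  have hioy : 0 ≤ ⟪gdY (yk 1), y - yk 1⟫ := by
    have hmin : ∀ ζ ∈ Y, ⟪(0:F), yk 1⟫ + (1/RY^2) * dY (yk 1)
        ≤ ⟪(0:F), ζ⟫ + (1/RY^2) * dY ζ := by
      intro ζ hζ
      have h := hinit (xk 1) (hxkX 1) ζ hζ
      simp only [inner_zero_left]
      linarith
    have h := opt_cond hYc (hgdY (yk 1) (hykY 1)) (hykY 1) hmin hy
    simp only [inner_zero_left, zero_add] at h
    by_contra hcon
    push_neg at hcon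
    have : (1/RY^2) * ⟪gdY (yk 1), y - yk 1⟫ < 0 :=
      mul_neg_of_pos_of_neg (by positivity) hcon
    linarith
  -- initial Bregman bound
  have hinitX : (1/RX^2) * BX x (xk 1) ≤ 1 := by
    have h1 : BX x (xk 1) ≤ RX^2 := by
      rw [hBX]
      have := hRX x hx (xk 1) (hxkX 1)
      linarith [hiox]
    have h2 := mul_le_mul_of_nonneg_left h1 (show (0:ℝ) ≤ 1/RX^2 by positivity)
    have e : (1/RX^2) * RX^2 = 1 := by field_simp
    linarith
  have hinitY : (1/RY^2) * BY y (yk 1) ≤ 1 := by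
    have h1 : BY y (yk 1) ≤ RY^2 := by
      rw [hBY]
      have := hRY y hy (yk 1) (hykY 1)
      linarith [hioy]
    have h2 := mul_le_mul_of_nonneg_left h1 (show (0:ℝ) ≤ 1/RY^2 by positivity)
    have e : (1/RY^2) * RY^2 = 1 := by field_simp
    linarith
  -- telescoping
  have hsum2 : ∑ k ∈ Finset.Icc 1 N, η * (φ (uk (k+1)) y - φ x (vk (k+1))) ≤ 2 := by
    have h1 : ∑ k ∈ Finset.Icc 1 N, η * (φ (uk (k+1)) y - φ x (vk (k+1)))
        ≤ ∑ k ∈ Finset.Icc 1 N,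
          (((1/RX^2) * BX x (xk k) + (1/RY^2) * BY y (yk k))
            - ((1/RX^2) * BX x (xk (k+1)) + (1/RY^2) * BY y (yk (k+1)))) :=
      Finset.sum_le_sum (fun k hk => key k (Finset.mem_Icc.mp hk).1)
    have h2 : ∑ k ∈ Finset.Icc 1 N,
          (((1/RX^2) * BX x (xk k) + (1/RY^2) * BY y (yk k))
            - ((1/RX^2) * BX x (xk (k+1)) + (1/RY^2) * BY y (yk (k+1))))
        = ((1/RX^2) * BX x (xk 1) + (1/RY^2) * BY y (yk 1))
          - ((1/RX^2) * BX x (xk (1+N)) + (1/RY^2) * BY y (yk (1+N))) := by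
      rw [← Finset.Ico_add_one_right_eq_Icc, Finset.sum_Ico_eq_sum_range]
      have hNN : N + 1 - 1 = N := by omega
      rw [hNN]
      exact Finset.sum_range_sub'
        (fun i => (1/RX^2) * BX x (xk (1+i)) + (1/RY^2) * BY y (yk (1+i))) N
    have h3 : (0:ℝ) ≤ (1/RX^2) * BX x (xk (1+N)) + (1/RY^2) * BY y (yk (1+N)) := by
      have a1 := hBXnn x hx (xk (1+N)) (hxkX (1+N))
      have a2 := hBYnn y hy (yk (1+N)) (hykY (1+N))
      positivity
    linarith [h1, h2, h3, hinitX, hinitY]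
  -- Jensen / averaging
  have hcard : (Finset.Icc 1 N).card = N := by rw [Nat.card_Icc]; omega
  have hNpos : (0:ℝ) < N := by
    have : 0 < N := by omega
    exact_mod_cast this
  have hsumw : (0:ℝ) < ∑ _k ∈ Finset.Icc 1 N, (1:ℝ) := by
    rw [Finset.sum_const, hcard]
    simpa using hNpos
  have hJx : φ xt y ≤ (N:ℝ)⁻¹ * ∑ k ∈ Finset.Icc 1 N, φ (uk (k+1)) y := by
    have h := (hconv y hy).map_centerMass_le (t := Finset.Icc 1 N) (w := fun _ => (1:ℝ))
        (p := fun k => uk (k + 1)) (fun i _ => zero_le_one) hsumw (fun i _ => hukX _)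
    rw [centerMass_const_one, centerMass_const_one, hcard] at h
    simp only [Function.comp, smul_eq_mul] at h
    rw [← hxt] at h
    exact h
  have hJy : (N:ℝ)⁻¹ * ∑ k ∈ Finset.Icc 1 N, φ x (vk (k+1)) ≤ φ x yt := by
    have h := ((hconc x hx).neg).map_centerMass_le (t := Finset.Icc 1 N)
        (w := fun _ => (1:ℝ)) (p := fun k => vk (k + 1))
        (fun i _ => zero_le_one) hsumw (fun i _ => hvkY _)
    rw [centerMass_const_one, centerMass_const_one, hcard] at h
    simp only [Function.comp, smul_eq_mul, Pi.neg_apply] at h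
    rw [← hyt] at h
    rw [Finset.sum_neg_distrib] at h
    linarith
  have hgapN : φ xt y - φ x yt
      ≤ (N:ℝ)⁻¹ * ∑ k ∈ Finset.Icc 1 N, (φ (uk (k+1)) y - φ x (vk (k+1))) := by
    rw [Finset.sum_sub_distrib, mul_sub]
    linarith [hJx, hJy]
  -- final arithmetic
  have hS : ∑ k ∈ Finset.Icc 1 N, (φ (uk (k+1)) y - φ x (vk (k+1))) ≤ 2 / η := by
    rw [le_div_iff₀ hηpos]
    calc (∑ k ∈ Finset.Icc 1 N, (φ (uk (k+1)) y - φ x (vk (k+1)))) * η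
        = ∑ k ∈ Finset.Icc 1 N, η * (φ (uk (k+1)) y - φ x (vk (k+1))) := by
          rw [Finset.sum_mul]
          exact Finset.sum_congr rfl (fun k _ => by ring)
      _ ≤ 2 := hsum2
  have h2η : 2 / η = 4 * L := by
    rw [hη]
    field_simp
    ring
  have hεN : 4 * L ≤ (N:ℝ) * ε := by
    have h := mul_le_mul_of_nonneg_right hN (le_of_lt hε)
    have e : (4/ε) * L * ε = 4 * L := by field_simp
    rw [e] at h
    linarith [h]
  have hfin : (N:ℝ)⁻¹ * (2/η) ≤ ε := by
    rw [h2η, inv_mul_le_iff₀ hNpos]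
    linarith [hεN]
  have hmono : (N:ℝ)⁻¹ * ∑ k ∈ Finset.Icc 1 N, (φ (uk (k+1)) y - φ x (vk (k+1)))
      ≤ (N:ℝ)⁻¹ * (2/η) :=
    mul_le_mul_of_nonneg_left hS (by positivity)
  linarith [hgapN, hmono, hfin]
end
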